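/- For every real-valued function f differentiable on an interval [a,b] with 0 < a < b (so [a,b] does not contain 0), and for all pairs x₁ ≠ x₂ in [a,b], there exists a point ξ strictly between x₁ and x₂ such that (x₁ f(x₂) - x₂ f(x₁))/(x₁ - x₂) = f(ξ) - ξ f'(ξ). -/
import Mathlib


/-- Pompeiu's mean value theorem: for `f` continuous on `[a,b]` and differentiable on
`(a,b)` with `0 < a < b`, and `x₁ ≠ x₂` in `[a,b]`, there is `ξ` strictly between `x₁`
and `x₂` with `(x₁ f(x₂) - x₂ f(x₁))/(x₁ - x₂) = f(ξ) - ξ f'(ξ)`. -/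
theorem pompeiu_mvt (f : ℝ → ℝ) (a b : ℝ) (ha : 0 < a) (hab : a < b)
    (hfc : ContinuousOn f (Set.Icc a b))
    (hfd : ∀ x ∈ Set.Ioo a b, DifferentiableAt ℝ f x)
    (x₁ x₂ : ℝ) (hx₁ : x₁ ∈ Set.Icc a b) (hx₂ : x₂ ∈ Set.Icc a b) (hne : x₁ ≠ x₂) :
    ∃ ξ ∈ Set.Ioo (min x₁ x₂) (max x₁ x₂),
      (x₁ * f x₂ - x₂ * f x₁) / (x₁ - x₂) = f ξ - ξ * deriv f ξ := by
  wlog h12 : x₁ < x₂ generalizing x₁ x₂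
  · obtain ⟨ξ, hξ, he⟩ := this x₂ x₁ hx₂ hx₁ hne.symm
      (lt_of_le_of_ne (not_lt.1 h12) hne.symm)
    refine ⟨ξ, by rwa [min_comm, max_comm], ?_⟩
    rw [← he, div_eq_div_iff (sub_ne_zero.2 hne) (sub_ne_zero.2 hne.symm)]
    ring
  rw [min_eq_left h12.le, max_eq_right h12.le]
  have hsub : Set.Icc x₁ x₂ ⊆ Set.Icc a b := Set.Icc_subset_Icc hx₁.1 hx₂.2
  have hsubo : Set.Ioo x₁ x₂ ⊆ Set.Ioo a b := Set.Ioo_subset_Ioo hx₁.1 hx₂.2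
  have hpos : ∀ x ∈ Set.Icc x₁ x₂, (0:ℝ) < x := fun x hx =>
    lt_of_lt_of_le ha (le_trans hx₁.1 hx.1)
  have hFc : ContinuousOn (fun x => f x / x) (Set.Icc x₁ x₂) :=
    (hfc.mono hsub).div continuousOn_id (fun x hx => (hpos x hx).ne')
  have hGc : ContinuousOn (fun x : ℝ => x⁻¹) (Set.Icc x₁ x₂) :=
    continuousOn_inv₀.mono (fun x hx => (hpos x hx).ne')
  obtain ⟨ξ, hξ, he⟩ := exists_ratio_hasDerivAt_eq_ratio_slope
    (fun x => f x / x) (fun x => (deriv f x * x - f x * 1) / x ^ 2)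
    h12 hFc
    (fun x hx => ((hfd x (hsubo hx)).hasDerivAt).div (hasDerivAt_id x)
      (hpos x (Set.Ioo_subset_Icc_self hx)).ne')
    (fun x : ℝ => x⁻¹) (fun x => -(x ^ 2)⁻¹) hGc
    (fun x hx => hasDerivAt_inv (hpos x (Set.Ioo_subset_Icc_self hx)).ne')
  refine ⟨ξ, hξ, ?_⟩
  have h1 : (0:ℝ) < x₁ := hpos x₁ (Set.left_mem_Icc.2 h12.le)
  have h2 : (0:ℝ) < x₂ := hpos x₂ (Set.right_mem_Icc.2 h12.le)
  have hξ0 : (0:ℝ) < ξ := hpos ξ (Set.Ioo_subset_Icc_self hξ)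
  field_simp at he
  rw [div_eq_iff (sub_ne_zero.2 hne)]
  linear_combination he
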